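/- The function f(x) = (e^x − 1)(1 − x) is strictly monotonically increasing on the interval [0, 1/2]. -/

import Mathlib

theorem strictMonoOn_exp_sub_one_mul_one_sub :
    StrictMonoOn (fun x : ℝ => (Real.exp x - 1) * (1 - x)) (Set.Icc 0 (1/2)) := by
  apply strictMonoOn_of_deriv_pos (convex_Icc _ _)
  · exact (Continuous.mul (by continuity) (by continuity)).continuousOn
  · intro x hx
    rw [interior_Icc] at hx
    have h : HasDerivAt (fun x : ℝ => (Real.exp x - 1) * (1 - x))
        (Real.exp x * (1 - x) + (Real.exp x - 1) * (-1)) x := by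
      have := (((Real.hasDerivAt_exp x).sub_const 1).mul
        ((hasDerivAt_const x (1:ℝ)).sub (hasDerivAt_id x)))
      exact this.congr_deriv (by simp only [Pi.sub_apply, id]; ring)
    rw [h.deriv]
    have h1 : Real.exp x < Real.exp (1/2) := Real.exp_lt_exp.2 hx.2
    have h2 : Real.exp (1/2) < 2 := by
      have := Real.exp_one_lt_d9
      have hsq : Real.exp (1/2) ^ 2 = Real.exp 1 := by
        rw [← Real.exp_nat_mul]; norm_num
      nlinarith [Real.exp_pos (1/2 : ℝ)]
    nlinarith [hx.1, hx.2, Real.exp_pos x]
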